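/- In the transvection group example, the cochain λ ∈ Hom_{A^e}(X_{1,1}, A) determined by λ((1 ⊗ gⁱ ⊗ 1) ⊗ (1 ⊗ v ⊗ 1)) = 0 and λ((1 ⊗ gⁱ ⊗ 1) ⊗ (1 ⊗ w ⊗ 1)) = i g^{i−1} for 0 ≤ i ≤ p−1, extended by zero to the other components of X₂, is a Hochschild 2-cocycle on the twisted product resolution X. -/

import Mathlib

open scoped TensorProduct
open MulOpposite

noncomputable section

universe u

variable (p : ℕ) [Fact p.Prime] (k : Type u) [Field k] [CharP k p]

/-- The submodule of middle-linearity relations defining the tensor product over `R`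
of a right `R`-module `M` and a left `R`-module `N`. -/
def midRel (R : Type u) [Ring R] (M N : Type u)
    [AddCommGroup M] [Module k M] [Module Rᵐᵒᵖ M]
    [AddCommGroup N] [Module k N] [Module R N] : Submodule k (M ⊗[k] N) :=
  Submodule.span k
    {z | ∃ (r : R) (m : M) (n : N), z = (op r • m) ⊗ₜ[k] n - m ⊗ₜ[k] (r • n)}

/-- The tensor product `M ⊗_R N` over `R`, as a quotient of `M ⊗[k] N`. -/
abbrev OverR (R : Type u) [Ring R] (M N : Type u)
    [AddCommGroup M] [Module k M] [Module Rᵐᵒᵖ M]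
    [AddCommGroup N] [Module k N] [Module R N] : Type u :=
  (M ⊗[k] N) ⧸ midRel k R M N

/-- The image of a pure tensor in `M ⊗_R N`. -/
abbrev omk (R : Type u) [Ring R] {M N : Type u}
    [AddCommGroup M] [Module k M] [Module Rᵐᵒᵖ M]
    [AddCommGroup N] [Module k N] [Module R N] (m : M) (n : N) :
    OverR k R M N :=
  Submodule.Quotient.mk (m ⊗ₜ[k] n)

/-- The middle-linearity relations for the triple tensor product `M ⊗_R M ⊗_R M`. -/
def midRel3 (R : Type u) [Ring R] (M : Type u)
    [AddCommGroup M] [Module k M] [Module R M] [Module Rᵐᵒᵖ M] :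
    Submodule k (M ⊗[k] (M ⊗[k] M)) :=
  Submodule.span k
    ({z | ∃ (r : R) (m n q : M),
        z = (op r • m) ⊗ₜ[k] (n ⊗ₜ[k] q) - m ⊗ₜ[k] ((r • n) ⊗ₜ[k] q)} ∪
     {z | ∃ (r : R) (m n q : M),
        z = m ⊗ₜ[k] ((op r • n) ⊗ₜ[k] q) - m ⊗ₜ[k] (n ⊗ₜ[k] (r • q))})

/-- The triple tensor product `M ⊗_R M ⊗_R M` over `R`. -/
abbrev Over3 (R : Type u) [Ring R] (M : Type u)
    [AddCommGroup M] [Module k M] [Module R M] [Module Rᵐᵒᵖ M] : Type u :=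
  (M ⊗[k] (M ⊗[k] M)) ⧸ midRel3 k R M

/-- The image of a pure tensor in `M ⊗_R M ⊗_R M`. -/
abbrev omk3 (R : Type u) [Ring R] {M : Type u}
    [AddCommGroup M] [Module k M] [Module R M] [Module Rᵐᵒᵖ M] (m n q : M) :
    Over3 k R M :=
  Submodule.Quotient.mk (m ⊗ₜ[k] (n ⊗ₜ[k] q))

/-- The cyclic group `G = ℤ/pℤ`, written multiplicatively, generated by the
transvection `g = (1 1 / 0 1)` acting on `V = k²`. -/
abbrev Gp : Type := Multiplicative (ZMod p)

/-- The generator `g` of `G ≅ ℤ/pℤ`. -/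
def gg : Gp p := Multiplicative.ofAdd (1 : ZMod p)

/-- `S = S(V) ≅ k[v,w]`, the symmetric algebra on `V = k²`. -/
abbrev SV : Type u := MvPolynomial (Fin 2) k

/-- The basis vector `v` of `V`, as an element of `S(V)`. -/
def vv : SV k := MvPolynomial.X 0

/-- The basis vector `w` of `V`, as an element of `S(V)`. -/
def ww : SV k := MvPolynomial.X 1

variable [MulSemiringAction (Gp p) (SV k)] [SMulCommClass (Gp p) k (SV k)]

variable (C : Type u) [AddCommGroup C] [Module k C]
  [Module (MonoidAlgebra k (Gp p)) C] [Module (MonoidAlgebra k (Gp p))ᵐᵒᵖ C]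
  [IsScalarTower k (MonoidAlgebra k (Gp p)) C]
  [IsScalarTower k (MonoidAlgebra k (Gp p))ᵐᵒᵖ C]
  [SMulCommClass (MonoidAlgebra k (Gp p)) (MonoidAlgebra k (Gp p))ᵐᵒᵖ C]
  [SMulCommClass (MonoidAlgebra k (Gp p)) k C]
  [SMulCommClass (MonoidAlgebra k (Gp p))ᵐᵒᵖ k C]

/-- The reduced bar resolution `C` of `kG`, `C_n = kG ⊗ (kG/k·1)^{⊗n} ⊗ kG`, presented by
its spanning generators: `gen n a` records `a 0 ⊗ (a 1)⁻ ⊗ ⋯ ⊗ (a n)⁻ ⊗ a (n+1)` for group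
elements `a t` (only the entries `a 0, …, a (n+1)` are relevant, and a generator vanishes
whenever one of its middle entries equals `1`).  The sign operator `ε_C` is included. -/
structure RedBarC : Type u where
  gr : ℕ → Submodule k C
  internal : DirectSum.IsInternal gr
  gen : ℕ → (ℕ → Gp p) → C
  gen_gr : ∀ (n : ℕ) (a : ℕ → Gp p), gen n a ∈ gr n
  gen_span : ∀ n : ℕ, gr n ≤ Submodule.span k {x | ∃ a : ℕ → Gp p, x = gen n a}
  gen_congr : ∀ (n : ℕ) (a b : ℕ → Gp p), (∀ t ≤ n + 1, a t = b t) → gen n a = gen n b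
  reduced : ∀ (n : ℕ) (a : ℕ → Gp p) (t : ℕ), 1 ≤ t → t ≤ n → a t = 1 → gen n a = 0
  smul_gen : ∀ (g₀ : Gp p) (n : ℕ) (a : ℕ → Gp p),
    (MonoidAlgebra.single g₀ (1 : k)) • gen n a =
      gen n (Function.update a 0 (g₀ * a 0))
  smul_op_gen : ∀ (g₁ : Gp p) (n : ℕ) (a : ℕ → Gp p),
    (op (MonoidAlgebra.single g₁ (1 : k))) • gen n a =
      gen n (Function.update a (n + 1) (a (n + 1) * g₁))
  d : C →ₗ[k] C
  d_gen : ∀ (n : ℕ) (a : ℕ → Gp p),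
    d (gen (n + 1) a) = ∑ i ∈ Finset.range (n + 2), (-1 : k) ^ i •
      gen n (fun t => if t < i then a t else if t = i then a i * a (i + 1) else a (t + 1))
  d_zero : ∀ a : ℕ → Gp p, d (gen 0 a) = 0
  aug : C →ₗ[k] MonoidAlgebra k (Gp p)
  aug_gen : ∀ a : ℕ → Gp p, aug (gen 0 a) = MonoidAlgebra.single (a 0 * a 1) (1 : k)
  aug_gr : ∀ (n : ℕ) (x : C), x ∈ gr (n + 1) → aug x = 0
  eps : C →ₗ[k] C
  eps_gen : ∀ (n : ℕ) (a : ℕ → Gp p), eps (gen n a) = (-1 : k) ^ n • gen n a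

variable (D : Type u) [AddCommGroup D] [Module k D]
  [Module (SV k) D] [Module (SV k)ᵐᵒᵖ D]
  [IsScalarTower k (SV k) D] [IsScalarTower k (SV k)ᵐᵒᵖ D]
  [SMulCommClass (SV k) (SV k)ᵐᵒᵖ D] [SMulCommClass (SV k) k D]
  [SMulCommClass (SV k)ᵐᵒᵖ k D]
  [DistribMulAction (Gp p) D] [SMulCommClass (Gp p) k D]

/-- The Koszul resolution `D` of `S = S(V)`, `D_j = S ⊗ Λ^j V ⊗ S` for `V = k²`,
presented by its generators: `gen0 s s' = s ⊗ s'`, `gen1v s s' = s ⊗ v ⊗ s'`,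
`gen1w s s' = s ⊗ w ⊗ s'` and `gen2 s s' = s ⊗ v∧w ⊗ s'`, with the Koszul differential,
augmentation given by multiplication, the evident `S`-bimodule structure, and the
`G`-action induced by `ᵍv = v`, `ᵍw = v + w`. -/
structure KoszulD : Type u where
  gr : ℕ → Submodule k D
  internal : DirectSum.IsInternal gr
  gr_top : ∀ n : ℕ, gr (n + 3) = ⊥
  gen0 : SV k →ₗ[k] SV k →ₗ[k] D
  gen1v : SV k →ₗ[k] SV k →ₗ[k] D
  gen1w : SV k →ₗ[k] SV k →ₗ[k] D
  gen2 : SV k →ₗ[k] SV k →ₗ[k] D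
  gen0_gr : ∀ s s' : SV k, gen0 s s' ∈ gr 0
  gen1v_gr : ∀ s s' : SV k, gen1v s s' ∈ gr 1
  gen1w_gr : ∀ s s' : SV k, gen1w s s' ∈ gr 1
  gen2_gr : ∀ s s' : SV k, gen2 s s' ∈ gr 2
  span0 : gr 0 ≤ Submodule.span k {x | ∃ s s' : SV k, x = gen0 s s'}
  span1 : gr 1 ≤ Submodule.span k
    {x | (∃ s s' : SV k, x = gen1v s s') ∨ (∃ s s' : SV k, x = gen1w s s')}
  span2 : gr 2 ≤ Submodule.span k {x | ∃ s s' : SV k, x = gen2 s s'}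
  smul_gen0 : ∀ s₀ s s' : SV k, s₀ • gen0 s s' = gen0 (s₀ * s) s'
  smul_gen1v : ∀ s₀ s s' : SV k, s₀ • gen1v s s' = gen1v (s₀ * s) s'
  smul_gen1w : ∀ s₀ s s' : SV k, s₀ • gen1w s s' = gen1w (s₀ * s) s'
  smul_gen2 : ∀ s₀ s s' : SV k, s₀ • gen2 s s' = gen2 (s₀ * s) s'
  smul_op_gen0 : ∀ s₁ s s' : SV k, op s₁ • gen0 s s' = gen0 s (s' * s₁)
  smul_op_gen1v : ∀ s₁ s s' : SV k, op s₁ • gen1v s s' = gen1v s (s' * s₁)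
  smul_op_gen1w : ∀ s₁ s s' : SV k, op s₁ • gen1w s s' = gen1w s (s' * s₁)
  smul_op_gen2 : ∀ s₁ s s' : SV k, op s₁ • gen2 s s' = gen2 s (s' * s₁)
  gact_gen0 : ∀ s s' : SV k,
    gg p • gen0 s s' = gen0 (gg p • s) (gg p • s')
  gact_gen1v : ∀ s s' : SV k,
    gg p • gen1v s s' = gen1v (gg p • s) (gg p • s')
  gact_gen1w : ∀ s s' : SV k,
    gg p • gen1w s s' = gen1v (gg p • s) (gg p • s') + gen1w (gg p • s) (gg p • s')
  gact_gen2 : ∀ s s' : SV k,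
    gg p • gen2 s s' = gen2 (gg p • s) (gg p • s')
  d : D →ₗ[k] D
  d_gen0 : ∀ s s' : SV k, d (gen0 s s') = 0
  d_gen1v : ∀ s s' : SV k, d (gen1v s s') = gen0 (s * vv k) s' - gen0 s (vv k * s')
  d_gen1w : ∀ s s' : SV k, d (gen1w s s') = gen0 (s * ww k) s' - gen0 s (ww k * s')
  d_gen2 : ∀ s s' : SV k, d (gen2 s s') =
    gen1w (s * vv k) s' - gen1w s (vv k * s') - gen1v (s * ww k) s' + gen1v s (ww k * s')
  aug : D →ₗ[k] SV k
  aug_gen0 : ∀ s s' : SV k, aug (gen0 s s') = s * s'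
  aug_gr : ∀ (n : ℕ) (x : D), x ∈ gr (n + 1) → aug x = 0

variable (A : Type u) [Ring A] [Algebra k A]

/-- The `k`-linear map `S ⊗ kG → A` sending `s ⊗ g ↦ ιS(s) ιG(g)`; requiring it to be
bijective expresses that `A = S(V) ⋊ G` is the skew group algebra. -/
def skewAssembly (ιS : SV k →ₐ[k] A) (ιG : Gp p →* A) : (Gp p →₀ SV k) →ₗ[k] A :=
  Finsupp.lsum k fun g => (LinearMap.mulRight k (ιG g)) ∘ₗ ιS.toLinearMap

/-- The homogeneous component of total homological degree `n` of `X = C ⊗ D`. -/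
def Xdeg (grC : ℕ → Submodule k C) (grD : ℕ → Submodule k D) (n : ℕ) :
    Submodule k (C ⊗[k] D) :=
  ⨆ (q : ℕ × ℕ) (_ : q.1 + q.2 = n),
    Submodule.span k
      (Set.image2 (fun (c : C) (d : D) => c ⊗ₜ[k] d) (grC q.1 : Set C) (grD q.2 : Set D))

variable {p k C D A}

section Aux
set_option linter.unusedSectionVars false
variable {p : ℕ} [Fact p.Prime] {k : Type u} [Field k] [CharP k p]

theorem nzp : NeZero p := ⟨(Fact.out (p := p.Prime)).ne_zero⟩

/-- coefficient map `G → k`, `gⁱ ↦ i`. -/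
def chi (y : Gp p) : k := ZMod.castHom (dvd_refl p) k (Multiplicative.toAdd y)

theorem chi_mul (y z : Gp p) : (chi (y * z) : k) = chi y + chi z := by
  simp [chi]

theorem chi_one : (chi (1 : Gp p) : k) = 0 := by simp [chi]

theorem chi_inv (y : Gp p) : (chi y⁻¹ : k) = - chi y := by
  have := chi_mul (k := k) y⁻¹ y
  rw [inv_mul_cancel, chi_one] at this
  linear_combination -this

theorem gg_pow (n : ℕ) : gg p ^ n = Multiplicative.ofAdd (n : ZMod p) := by
  rw [gg, ← ofAdd_nsmul]
  congr 1
  simp [nsmul_eq_mul]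

theorem chi_pow (i : ℕ) : (chi (gg p ^ i) : k) = (i : k) := by
  rw [gg_pow]
  simp [chi]

theorem gg_pow_val (y : Gp p) : gg p ^ (Multiplicative.toAdd y).val = y := by
  haveI : NeZero p := nzp
  rw [gg_pow, ZMod.natCast_rightInverse (Multiplicative.toAdd y)]
  rfl

/-- the function recording a bar-resolution generator of degree 1. -/
def aF (y0 y1 y2 : Gp p) : ℕ → Gp p :=
  fun t => if t = 0 then y0 else if t = 1 then y1 else if t = 2 then y2 else 1

theorem aF_up0 (y0 y1 y2 z : Gp p) :
    Function.update (aF y0 y1 y2) 0 z = aF z y1 y2 := by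
  funext t
  by_cases h : t = 0 <;> simp [Function.update_apply, aF, h]

theorem aF_up2 (y0 y1 y2 z : Gp p) :
    Function.update (aF y0 y1 y2) 2 z = aF y0 y1 z := by
  funext t
  rcases eq_or_ne t 2 with h | h <;>
    simp [Function.update_apply, aF, h]

theorem aF_prod (y0 y1 y2 : Gp p) :
    ∏ t ∈ Finset.range 3, aF y0 y1 y2 t = y0 * y1 * y2 := by
  rw [Finset.prod_range_succ, Finset.prod_range_succ, Finset.prod_range_one]
  simp [aF]

end Aux

set_option maxHeartbeats 1600000 in
/-- In the transvection group example (`char k = p > 0`,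
`G = ⟨g⟩ ≅ ℤ/pℤ` acting on `V = k²` by `ᵍv = v`, `ᵍw = v + w`, `A = S(V) ⋊ G`,
`X = C ⊗^G D` for `C` the reduced bar resolution of `kG` and `D` the Koszul resolution
of `S(V)`), the cochain `λ ∈ Hom_{A^e}(X_{1,1}, A)` determined by
`λ((1 ⊗ gⁱ ⊗ 1) ⊗ (1 ⊗ v ⊗ 1)) = 0` and `λ((1 ⊗ gⁱ ⊗ 1) ⊗ (1 ⊗ w ⊗ 1)) = i g^{i−1}`,
extended by zero to the other components of `X₂`, is a Hochschild 2-cocycle on `X`, i.e.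
it vanishes on the image of the differential `∂ : X₃ → X₂`
(where `∂_X = ∂_C ⊗ 1 + ε_C ⊗ ∂_D`). -/
theorem lambda_is_cocycle
    (RC : RedBarC p k C) (RD : KoszulD p k D)
    -- the action of `G` on `S(V) = k[v,w]`: `ᵍv = v`, `ᵍw = v + w`
    (hgv : gg p • vv k = vv k) (hgw : gg p • ww k = vv k + ww k)
    -- the skew group algebra `A = S(V) ⋊ G`
    (ιS : SV k →ₐ[k] A) (ιG : Gp p →* A)
    (hcomm : ∀ (g : Gp p) (s : SV k), ιG g * ιS s = ιS (g • s) * ιG g)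
    (hskew : Function.Bijective (skewAssembly p k A ιS ιG))
    -- the `A`-bimodule structure on `X = C ⊗ D` (twisted product resolution)
    [Module A (C ⊗[k] D)] [Module Aᵐᵒᵖ (C ⊗[k] D)]
    [IsScalarTower k A (C ⊗[k] D)] [IsScalarTower k Aᵐᵒᵖ (C ⊗[k] D)]
    [SMulCommClass A Aᵐᵒᵖ (C ⊗[k] D)]
    (hactL : ∀ (s' : SV k) (g' : Gp p) (n : ℕ) (a : ℕ → Gp p) (d : D),
      (ιS s' * ιG g') • (RC.gen n a ⊗ₜ[k] d) =
        ((MonoidAlgebra.single g' (1 : k)) • RC.gen n a) ⊗ₜ[k]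
          ((((g' * ∏ t ∈ Finset.range (n + 2), a t)⁻¹ : Gp p) • s') • d))
    (hactR : ∀ (s : SV k) (g : Gp p) (c : C) (d : D),
      (op (ιS s * ιG g)) • (c ⊗ₜ[k] d) =
        (op (MonoidAlgebra.single g (1 : k)) • c) ⊗ₜ[k] ((g⁻¹ : Gp p) • (op s • d)))
    -- the cochain `λ ∈ Hom_{A^e}(X_{1,1}, A)`:
    (lam : C ⊗[k] D →ₗ[k] A)
    (hlamL : ∀ (a : A) (x : C ⊗[k] D), lam (a • x) = a * lam x)
    (hlamR : ∀ (c : Aᵐᵒᵖ) (x : C ⊗[k] D), lam (c • x) = lam x * c.unop)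
    (hlam_supp : ∀ i j : ℕ, ¬(i = 1 ∧ j = 1) →
      ∀ c ∈ RC.gr i, ∀ d ∈ RD.gr j, lam (c ⊗ₜ[k] d) = 0)
    (hlam_v : ∀ i : ℕ, i ≤ p - 1 →
      lam (RC.gen 1 (fun t => if t = 1 then (gg p) ^ i else 1) ⊗ₜ[k] RD.gen1v 1 1) = 0)
    (hlam_w : ∀ i : ℕ, i ≤ p - 1 →
      lam (RC.gen 1 (fun t => if t = 1 then (gg p) ^ i else 1) ⊗ₜ[k] RD.gen1w 1 1) =
        (i : k) • ιG ((gg p) ^ (i - 1)))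
 :
    lam ∘ₗ (TensorProduct.map RC.d (LinearMap.id : D →ₗ[k] D) +
      TensorProduct.map RC.eps RD.d) = 0 := by
  classical
  haveI : NeZero p := nzp
  -- abbreviation for the total differential
  set M : C ⊗[k] D →ₗ[k] C ⊗[k] D :=
    TensorProduct.map RC.d (LinearMap.id : D →ₗ[k] D) +
      TensorProduct.map RC.eps RD.d with hM
  -- `chi` computes exponents
  have hchi_val : ∀ y : Gp p, (chi y : k) = ((Multiplicative.toAdd y).val : k) := fun y => by
    conv_lhs => rw [← gg_pow_val y]
    exact chi_pow _
  -- action of group elements on v and w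
  have hvw : ∀ i : ℕ, (gg p ^ i) • vv k = vv k ∧
      (gg p ^ i) • ww k = (i : k) • vv k + ww k := by
    intro i
    induction i with
    | zero => simp
    | succ n ih =>
      constructor
      · rw [pow_succ, mul_smul, hgv, ih.1]
      · rw [pow_succ, mul_smul, hgw, smul_add, ih.1, ih.2]
        push_cast
        module
  have hv : ∀ y : Gp p, y • vv k = vv k := fun y => by
    conv_lhs => rw [← gg_pow_val y]
    exact (hvw _).1
  have hw : ∀ y : Gp p, y • ww k = (chi y : k) • vv k + ww k := fun y => by
    conv_lhs => rw [← gg_pow_val y]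
    rw [(hvw _).2, hchi_val]
  -- action of group elements on the degree-1 Koszul generators
  have hDvw : ∀ (i : ℕ) (s s' : SV k),
      (gg p ^ i) • RD.gen1v s s' = RD.gen1v ((gg p ^ i) • s) ((gg p ^ i) • s') ∧
      (gg p ^ i) • RD.gen1w s s' =
        (i : k) • RD.gen1v ((gg p ^ i) • s) ((gg p ^ i) • s')
          + RD.gen1w ((gg p ^ i) • s) ((gg p ^ i) • s') := by
    intro i
    induction i with
    | zero => simp
    | succ n ih =>
      intro s s'
      constructor
      · rw [pow_succ, mul_smul, RD.gact_gen1v, (ih _ _).1, ← mul_smul, ← mul_smul, ← pow_succ]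
      · rw [pow_succ, mul_smul, RD.gact_gen1w, smul_add, (ih _ _).1, (ih _ _).2,
          ← mul_smul, ← mul_smul, ← pow_succ]
        push_cast
        module
  have hDv : ∀ (y : Gp p) (s s' : SV k), y • RD.gen1v s s' = RD.gen1v (y • s) (y • s') := by
    intro y s s'
    conv_lhs => rw [← gg_pow_val y]
    rw [(hDvw _ _ _).1, gg_pow_val]
  have hDw : ∀ (y : Gp p) (s s' : SV k), y • RD.gen1w s s' =
      (chi y : k) • RD.gen1v (y • s) (y • s') + RD.gen1w (y • s) (y • s') := by
    intro y s s'
    conv_lhs => rw [← gg_pow_val y]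
    rw [(hDvw _ _ _).2, gg_pow_val, hchi_val]
  -- normal form for degree-1 bar generators
  have hgen1aF : ∀ a : ℕ → Gp p, RC.gen 1 a = RC.gen 1 (aF (a 0) (a 1) (a 2)) := by
    intro a
    refine RC.gen_congr 1 a _ ?_
    intro t ht
    interval_cases t <;> simp [aF]
  -- Stage R : peeling the right-hand group element and polynomial off
  have hRraw : ∀ (y0 y1 y2 : Gp p) (s₁ : SV k) (d : D),
      lam (RC.gen 1 (aF y0 y1 y2) ⊗ₜ[k] ((y2⁻¹ : Gp p) • (op s₁ • d))) =
      lam (RC.gen 1 (aF y0 y1 1) ⊗ₜ[k] d) * (ιS s₁ * ιG y2) := by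
    intro y0 y1 y2 s₁ d
    have h := hactR s₁ y2 (RC.gen 1 (aF y0 y1 1)) d
    rw [RC.smul_op_gen, show aF (p := p) y0 y1 1 (1 + 1) = 1 by norm_num [aF],
      one_mul, show (1 + 1 : ℕ) = 2 by norm_num, aF_up2] at h
    rw [← h, hlamR, unop_op]
  have hRv : ∀ (y0 y1 y2 : Gp p) (s s' : SV k),
      lam (RC.gen 1 (aF y0 y1 y2) ⊗ₜ[k] RD.gen1v s s') =
      lam (RC.gen 1 (aF y0 y1 1) ⊗ₜ[k] RD.gen1v (y2 • s) 1) * (ιS (y2 • s') * ιG y2) := by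
    intro y0 y1 y2 s s'
    have h := hRraw y0 y1 y2 (y2 • s') (RD.gen1v (y2 • s) 1)
    rw [RD.smul_op_gen1v, one_mul, hDv, inv_smul_smul, inv_smul_smul] at h
    exact h
  have hRw : ∀ (y0 y1 y2 : Gp p) (s s' : SV k),
      lam (RC.gen 1 (aF y0 y1 y2) ⊗ₜ[k] RD.gen1w s s') =
      lam (RC.gen 1 (aF y0 y1 1) ⊗ₜ[k]
        ((chi y2 : k) • RD.gen1v (y2 • s) 1 + RD.gen1w (y2 • s) 1)) *
        (ιS (y2 • s') * ιG y2) := by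
    intro y0 y1 y2 s s'
    have h := hRraw y0 y1 y2 (y2 • s')
      ((chi y2 : k) • RD.gen1v (y2 • s) 1 + RD.gen1w (y2 • s) 1)
    have hinner : (y2⁻¹ : Gp p) • (op (y2 • s') •
        ((chi y2 : k) • RD.gen1v (y2 • s) 1 + RD.gen1w (y2 • s) 1)) = RD.gen1w s s' := by
      rw [smul_add, smul_comm (op (y2 • s')) (chi y2 : k),
        RD.smul_op_gen1v, RD.smul_op_gen1w, one_mul,
        smul_add, smul_comm (y2⁻¹ : Gp p) (chi y2 : k), hDv, hDw]
      simp only [inv_smul_smul, chi_inv]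
      module
    rw [hinner] at h
    exact h
  -- Stage L : peeling the left-hand group element and polynomial off
  have hL : ∀ (y0 y1 : Gp p) (u : SV k) (d : D),
      lam (RC.gen 1 (aF y0 y1 1) ⊗ₜ[k] (u • d)) =
      ιS ((y0 * y1) • u) * ιG y0 * lam (RC.gen 1 (aF 1 y1 1) ⊗ₜ[k] d) := by
    intro y0 y1 u d
    have h := hactL ((y0 * y1) • u) y0 1 (aF 1 y1 1) d
    rw [RC.smul_gen, show aF (p := p) 1 y1 1 0 = 1 by norm_num [aF], mul_one, aF_up0,
      show ∏ t ∈ Finset.range (1 + 2), aF (p := p) 1 y1 1 t = y1 by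
        rw [show (1 + 2 : ℕ) = 3 from rfl, aF_prod, one_mul, mul_one],
      inv_smul_smul] at h
    rw [← h, hlamL]
  -- base values
  have hBgen : ∀ i : ℕ, RC.gen 1 (aF 1 (gg p ^ i) 1) =
      RC.gen 1 (fun t => if t = 1 then gg p ^ i else 1) := by
    intro i
    refine RC.gen_congr 1 _ _ ?_
    intro t ht
    interval_cases t <;> simp [aF]
  have hBv : ∀ y1 : Gp p, lam (RC.gen 1 (aF 1 y1 1) ⊗ₜ[k] RD.gen1v 1 1) = 0 := by
    intro y1
    obtain ⟨m, hmle, rfl⟩ : ∃ m, m ≤ p - 1 ∧ gg p ^ m = y1 :=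
      ⟨_, Nat.le_sub_one_of_lt (ZMod.val_lt _), gg_pow_val y1⟩
    rw [hBgen]
    exact hlam_v m hmle
  have hBw : ∀ y1 : Gp p, lam (RC.gen 1 (aF 1 y1 1) ⊗ₜ[k] RD.gen1w 1 1) =
      (chi y1 : k) • ιG (y1 * (gg p)⁻¹) := by
    intro y1
    obtain ⟨m, hmle, rfl⟩ : ∃ m, m ≤ p - 1 ∧ gg p ^ m = y1 :=
      ⟨_, Nat.le_sub_one_of_lt (ZMod.val_lt _), gg_pow_val y1⟩
    rw [hBgen, hlam_w m hmle, chi_pow]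
    rcases Nat.eq_zero_or_pos m with rfl | hpos
    · simp
    · obtain ⟨n, rfl⟩ : ∃ n, m = n + 1 := ⟨m - 1, by omega⟩
      congr 1
      rw [Nat.add_sub_cancel, pow_succ, mul_inv_cancel_right]
  -- master formula, v-part
  have hMv : ∀ (y0 y1 y2 : Gp p) (s s' : SV k),
      lam (RC.gen 1 (aF y0 y1 y2) ⊗ₜ[k] RD.gen1v s s') = 0 := by
    intro y0 y1 y2 s s'
    rw [hRv, show RD.gen1v (y2 • s) 1 = (y2 • s) • RD.gen1v 1 1 by
      rw [RD.smul_gen1v, mul_one], hL, hBv, mul_zero, zero_mul]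
  -- a commuting helper in A
  have hmove : ∀ (g : Gp p) (s : SV k) (x : A), ιG g * (ιS s * x) = ιS (g • s) * (ιG g * x) := by
    intro g s x
    rw [← mul_assoc, hcomm, mul_assoc]
  -- master formula, w-part
  have hMw : ∀ (y0 y1 y2 : Gp p) (s s' : SV k),
      lam (RC.gen 1 (aF y0 y1 y2) ⊗ₜ[k] RD.gen1w s s') =
      (chi y1 : k) • (ιS ((y0 * y1 * y2) • s) *
        (ιS ((y0 * y1 * y2 * (gg p)⁻¹) • s') * ιG (y0 * y1 * y2 * (gg p)⁻¹))) := by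
    intro y0 y1 y2 s s'
    rw [hRw, TensorProduct.tmul_add, TensorProduct.tmul_smul, map_add, map_smul,
      hMv, smul_zero, zero_add,
      show RD.gen1w (y2 • s) 1 = (y2 • s) • RD.gen1w 1 1 by rw [RD.smul_gen1w, mul_one],
      hL, hBw]
    simp only [mul_smul_comm, smul_mul_assoc]
    congr 1
    simp only [mul_assoc]
    rw [hmove (y1 * (gg p)⁻¹) (y2 • s'), hmove y0, smul_smul, smul_smul,
      ← map_mul, ← map_mul, smul_smul]
    simp [mul_comm, mul_left_comm, mul_assoc]
  -- the differential of a degree-2 bar generator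
  have hdg2 : ∀ a : ℕ → Gp p, RC.d (RC.gen 2 a) =
      RC.gen 1 (aF (a 0 * a 1) (a 2) (a 3))
        + (-1 : k) • RC.gen 1 (aF (a 0) (a 1 * a 2) (a 3))
        + RC.gen 1 (aF (a 0) (a 1) (a 2 * a 3)) := by
    intro a
    have h := RC.d_gen 1 a
    rw [show (1 + 1 : ℕ) = 2 from rfl] at h
    rw [h]
    rw [show (1 + 2 : ℕ) = 3 from rfl, show (3 : ℕ) = 2 + 1 from rfl,
      Finset.sum_range_succ, show (2 : ℕ) = 1 + 1 from rfl, Finset.sum_range_succ,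
      Finset.sum_range_one]
    have e0 : RC.gen 1 (fun t => if t < 0 then a t else if t = 0 then a 0 * a (0 + 1)
          else a (t + 1)) = RC.gen 1 (aF (a 0 * a 1) (a 2) (a 3)) := by
      refine RC.gen_congr 1 _ _ ?_
      intro t ht
      interval_cases t <;> simp [aF]
    have e1 : RC.gen 1 (fun t => if t < 1 then a t else if t = 1 then a 1 * a (1 + 1)
          else a (t + 1)) = RC.gen 1 (aF (a 0) (a 1 * a 2) (a 3)) := by
      refine RC.gen_congr 1 _ _ ?_
      intro t ht
      interval_cases t <;> simp [aF]
    have e2 : RC.gen 1 (fun t => if t < 1 + 1 then a t else if t = 1 + 1 then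
          a (1 + 1) * a (1 + 1 + 1) else a (t + 1)) =
          RC.gen 1 (aF (a 0) (a 1) (a 2 * a 3)) := by
      refine RC.gen_congr 1 _ _ ?_
      intro t ht
      interval_cases t <;> simp [aF]
    rw [e0, e1, e2]
    norm_num
  -- cocycle computation A (pairing ∂C of a degree-2 generator with degree-1 Koszul gens)
  have hAv : ∀ (a : ℕ → Gp p) (s s' : SV k),
      lam (RC.d (RC.gen 2 a) ⊗ₜ[k] RD.gen1v s s') = 0 := by
    intro a s s'
    rw [hdg2, TensorProduct.add_tmul, TensorProduct.add_tmul, ← TensorProduct.smul_tmul',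
      map_add, map_add, map_smul, hMv, hMv, hMv]
    simp
  have hAw : ∀ (a : ℕ → Gp p) (s s' : SV k),
      lam (RC.d (RC.gen 2 a) ⊗ₜ[k] RD.gen1w s s') = 0 := by
    intro a s s'
    rw [hdg2, TensorProduct.add_tmul, TensorProduct.add_tmul, ← TensorProduct.smul_tmul',
      map_add, map_add, map_smul, hMw, hMw, hMw, chi_mul,
      show a 0 * (a 1 * a 2) * a 3 = a 0 * a 1 * a 2 * a 3 by simp [mul_assoc],
      show a 0 * a 1 * (a 2 * a 3) = a 0 * a 1 * a 2 * a 3 by simp [mul_assoc]]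
    module
  -- cocycle computation B (pairing a degree-1 generator with ∂D of the degree-2 Koszul gen)
  have hB2 : ∀ (a : ℕ → Gp p) (s s' : SV k),
      lam (RC.gen 1 a ⊗ₜ[k] RD.d (RD.gen2 s s')) = 0 := by
    intro a s s'
    rw [hgen1aF, RD.d_gen2]
    simp only [TensorProduct.tmul_sub, TensorProduct.tmul_add, map_sub, map_add]
    rw [hMv, hMv, hMw, hMw, smul_mul', smul_mul', hv, hv, map_mul, map_mul]
    simp [mul_assoc]
  -- membership lemmas
  have hdmem : ∀ (m : ℕ) (a : ℕ → Gp p), RC.d (RC.gen (m + 1) a) ∈ RC.gr m := by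
    intro m a
    rw [RC.d_gen]
    exact Submodule.sum_mem _ fun i _ => Submodule.smul_mem _ _ (RC.gen_gr _ _)
  have hdmem' : ∀ (n : ℕ) (a : ℕ → Gp p), 1 ≤ n → RC.d (RC.gen n a) ∈ RC.gr (n - 1) := by
    intro n a h
    obtain ⟨m, rfl⟩ : ∃ m, n = m + 1 := ⟨n - 1, by omega⟩
    simpa using hdmem m a
  have hepsmem : ∀ (n : ℕ) (a : ℕ → Gp p), RC.eps (RC.gen n a) ∈ RC.gr n := by
    intro n a
    rw [RC.eps_gen]
    exact Submodule.smul_mem _ _ (RC.gen_gr _ _)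
  have hd1vmem : ∀ s s' : SV k, RD.d (RD.gen1v s s') ∈ RD.gr 0 := by
    intro s s'
    rw [RD.d_gen1v]
    exact sub_mem (RD.gen0_gr _ _) (RD.gen0_gr _ _)
  have hd1wmem : ∀ s s' : SV k, RD.d (RD.gen1w s s') ∈ RD.gr 0 := by
    intro s s'
    rw [RD.d_gen1w]
    exact sub_mem (RD.gen0_gr _ _) (RD.gen0_gr _ _)
  have hd2mem : ∀ s s' : SV k, RD.d (RD.gen2 s s') ∈ RD.gr 1 := by
    intro s s'
    rw [RD.d_gen2]
    exact add_mem (sub_mem (sub_mem (RD.gen1w_gr _ _) (RD.gen1w_gr _ _)) (RD.gen1v_gr _ _))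
      (RD.gen1v_gr _ _)
  -- evaluating the total differential on pure tensors
  have hMapp : ∀ (c : C) (d : D), lam (M (c ⊗ₜ[k] d)) =
      lam (RC.d c ⊗ₜ[k] d) + lam (RC.eps c ⊗ₜ[k] RD.d d) := by
    intro c d
    rw [hM]
    simp only [LinearMap.add_apply, TensorProduct.map_tmul, LinearMap.id_coe, id_eq, map_add]
  -- the main generator-level cases
  have main0 : ∀ (n : ℕ) (a : ℕ → Gp p) (s s' : SV k),
      lam (M (RC.gen n a ⊗ₜ[k] RD.gen0 s s')) = 0 := by
    intro n a s s'
    rw [hMapp, RD.d_gen0, TensorProduct.tmul_zero, map_zero, add_zero]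
    rcases Nat.eq_zero_or_pos n with rfl | hn
    · rw [RC.d_zero, TensorProduct.zero_tmul, map_zero]
    · exact hlam_supp (n - 1) 0 (by omega) (RC.d (RC.gen n a)) (hdmem' n a hn) _
        (RD.gen0_gr s s')
  have main1 : ∀ (n : ℕ) (a : ℕ → Gp p) (d : D), d ∈ RD.gr 1 → RD.d d ∈ RD.gr 0 →
      (∀ a' : ℕ → Gp p, lam (RC.d (RC.gen 2 a') ⊗ₜ[k] d) = 0) →
      lam (M (RC.gen n a ⊗ₜ[k] d)) = 0 := by
    intro n a d hd1 hd0 h2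
    rw [hMapp]
    rcases Nat.lt_or_ge n 3 with hn | hn
    · interval_cases n
      · rw [RC.d_zero, TensorProduct.zero_tmul, map_zero, zero_add]
        exact hlam_supp 0 0 (by omega) (RC.eps (RC.gen 0 a)) (hepsmem 0 a) (RD.d d) hd0
      · rw [hlam_supp 0 1 (by omega) (RC.d (RC.gen 1 a)) (hdmem 0 a) d hd1,
          hlam_supp 1 0 (by omega) (RC.eps (RC.gen 1 a)) (hepsmem 1 a) (RD.d d) hd0, add_zero]
      · rw [h2 a, zero_add]
        exact hlam_supp 2 0 (by omega) (RC.eps (RC.gen 2 a)) (hepsmem 2 a) (RD.d d) hd0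
    · rw [hlam_supp (n - 1) 1 (by omega) (RC.d (RC.gen n a)) (hdmem' n a (by omega)) d hd1,
        hlam_supp n 0 (by omega) (RC.eps (RC.gen n a)) (hepsmem n a) (RD.d d) hd0, add_zero]
  have main2 : ∀ (n : ℕ) (a : ℕ → Gp p) (s s' : SV k),
      lam (M (RC.gen n a ⊗ₜ[k] RD.gen2 s s')) = 0 := by
    intro n a s s'
    rw [hMapp]
    rcases Nat.lt_or_ge n 2 with hn | hn
    · interval_cases n
      · rw [RC.d_zero, TensorProduct.zero_tmul, map_zero, zero_add]
        exact hlam_supp 0 1 (by omega) (RC.eps (RC.gen 0 a)) (hepsmem 0 a) _ (hd2mem s s')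
      · rw [hlam_supp 0 2 (by omega) (RC.d (RC.gen 1 a)) (hdmem 0 a) _ (RD.gen2_gr s s'),
          zero_add, RC.eps_gen, pow_one, ← TensorProduct.smul_tmul', map_smul, hB2, smul_zero]
    · rw [hlam_supp (n - 1) 2 (by omega) (RC.d (RC.gen n a)) (hdmem' n a (by omega)) _
          (RD.gen2_gr s s'),
        hlam_supp n 1 (by omega) (RC.eps (RC.gen n a)) (hepsmem n a) _ (hd2mem s s'),
        add_zero]
  -- assembling: the cocycle condition on all of X
  have stepD : ∀ (n : ℕ) (aa : ℕ → Gp p) (d : D), lam (M (RC.gen n aa ⊗ₜ[k] d)) = 0 := by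
    intro n aa d
    have hd : d ∈ ⨆ j, RD.gr j := by
      rw [RD.internal.submodule_iSup_eq_top]
      exact Submodule.mem_top
    refine Submodule.iSup_induction (motive := fun d => lam (M (RC.gen n aa ⊗ₜ[k] d)) = 0)
      RD.gr hd ?_ (by simp) ?_
    · intro j d hdj
      rcases j with _ | _ | _ | j
      · refine Submodule.span_induction
          (p := fun d _ => lam (M (RC.gen n aa ⊗ₜ[k] d)) = 0) ?_ (by simp) ?_ ?_
          (RD.span0 hdj)
        · rintro d ⟨s, s', rfl⟩
          exact main0 n aa s s'
        · intro x y _ _ hx hy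
          rw [TensorProduct.tmul_add, map_add, map_add, hx, hy, add_zero]
        · intro r x _ hx
          rw [TensorProduct.tmul_smul, map_smul, map_smul, hx, smul_zero]
      · refine Submodule.span_induction
          (p := fun d _ => lam (M (RC.gen n aa ⊗ₜ[k] d)) = 0) ?_ (by simp) ?_ ?_
          (RD.span1 hdj)
        · rintro d (⟨s, s', rfl⟩ | ⟨s, s', rfl⟩)
          · exact main1 n aa _ (RD.gen1v_gr s s') (hd1vmem s s')
              (fun a' => hAv a' s s')
          · exact main1 n aa _ (RD.gen1w_gr s s') (hd1wmem s s')
              (fun a' => hAw a' s s')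
        · intro x y _ _ hx hy
          rw [TensorProduct.tmul_add, map_add, map_add, hx, hy, add_zero]
        · intro r x _ hx
          rw [TensorProduct.tmul_smul, map_smul, map_smul, hx, smul_zero]
      · refine Submodule.span_induction
          (p := fun d _ => lam (M (RC.gen n aa ⊗ₜ[k] d)) = 0) ?_ (by simp) ?_ ?_
          (RD.span2 hdj)
        · rintro d ⟨s, s', rfl⟩
          exact main2 n aa s s'
        · intro x y _ _ hx hy
          rw [TensorProduct.tmul_add, map_add, map_add, hx, hy, add_zero]
        · intro r x _ hx
          rw [TensorProduct.tmul_smul, map_smul, map_smul, hx, smul_zero]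
      · have hdj' : d ∈ RD.gr (j + 3) := hdj
        rw [RD.gr_top j] at hdj'
        obtain rfl : d = (0 : D) := by simpa using hdj'
        simp
    · intro x y hx hy
      rw [TensorProduct.tmul_add, map_add, map_add, hx, hy, add_zero]
  have final : ∀ (c : C) (d : D), lam (M (c ⊗ₜ[k] d)) = 0 := by
    intro c d
    have hc : c ∈ ⨆ i, RC.gr i := by
      rw [RC.internal.submodule_iSup_eq_top]
      exact Submodule.mem_top
    refine Submodule.iSup_induction (motive := fun c => lam (M (c ⊗ₜ[k] d)) = 0)
      RC.gr hc ?_ (by simp) ?_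
    · intro i c hci
      refine Submodule.span_induction
        (p := fun c _ => lam (M (c ⊗ₜ[k] d)) = 0) ?_ (by simp) ?_ ?_
        (RC.gen_span i hci)
      · rintro c ⟨aa, rfl⟩
        exact stepD i aa d
      · intro x y _ _ hx hy
        rw [TensorProduct.add_tmul, map_add, map_add, hx, hy, add_zero]
      · intro r x _ hx
        rw [← TensorProduct.smul_tmul', map_smul, map_smul, hx, smul_zero]
    · intro x y hx hy
      rw [TensorProduct.add_tmul, map_add, map_add, hx, hy, add_zero]
  apply LinearMap.ext
  intro x
  simp only [LinearMap.comp_apply, LinearMap.zero_apply]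
  induction x using TensorProduct.induction_on with
  | zero => simp
  | tmul c d => exact final c d
  | add x y hx hy => rw [map_add, map_add, hx, hy, add_zero]

end
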